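/- Assume A(x,y) > 0 for all x, y ∈ Ω∪Ω_δ, all quadrature weights ω_{j,i} are positive, 0 < h < δ, and χ_h ∩ Ω ≠ ∅. Then for every right-hand side f : χ_h ∩ Ω → ℝ and every boundary datum u^D : χ_h ∩ Ω_δ → ℝ there exists a unique grid function u_h : χ_h → ℝ such that −(ℒ_h^δ u_h)(x_i) = f(x_i) for all x_i ∈ χ_h ∩ Ω and u_h(x_i) = u^D(x_i) for all x_i ∈ χ_h ∩ Ω_δ (well-posedness of the discretized nonlocal diffusion problem). -/
import Mathlib


open MeasureTheory Metric Set Filter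

noncomputable section

/-- Euclidean space ℝ^d. -/
abbrev Eu (d : ℕ) : Type := EuclideanSpace ℝ (Fin d)

/-- The nonlocal boundary collar Ω_δ = {x ∉ Ω : dist(x, ∂Ω) < δ}. -/
def NLcollar (d : ℕ) (Ω : Set (Eu d)) (δ : ℝ) : Set (Eu d) :=
  {x | x ∉ Ω ∧ Metric.infDist x (frontier Ω) < δ}

/-- The extended domain Ω ∪ Ω_δ. -/
def NLdom (d : ℕ) (Ω : Set (Eu d)) (δ : ℝ) : Set (Eu d) := Ω ∪ NLcollar d Ω δ

/-- The uniform Cartesian grid hℤ^d in ℝ^d. -/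
def gridSet (d : ℕ) (h : ℝ) : Set (Eu d) := {x | ∀ i, ∃ k : ℤ, x i = (k : ℝ) * h}

/-- The meshfree grid set χ_h = (hℤ^d) ∩ (Ω ∪ Ω_δ). -/
def chi (d : ℕ) (Ω : Set (Eu d)) (δ h : ℝ) : Set (Eu d) :=
  gridSet d h ∩ NLdom d Ω δ

/-- The singular kernel γ_δ(r) = D₀ / (δ^{d+2-s} r^s) for 0 < r ≤ δ, zero otherwise. -/
def gamK (d : ℕ) (s D₀ δ r : ℝ) : ℝ :=
  if 0 < r ∧ r ≤ δ then D₀ / (δ ^ ((d : ℝ) + 2 - s) * r ^ s) else 0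

/-- The discrete nonlocal diffusion operator ℒ_h^δ. -/
def Lh (d : ℕ) (Ω : Set (Eu d)) (δ h s D₀ : ℝ)
    (A ω : Eu d → Eu d → ℝ) (v : Eu d → ℝ) (xi : Eu d) : ℝ :=
  2 * ∑ᶠ xj ∈ {y | y ∈ chi d Ω δ h ∧ y ∈ ball xi δ ∧ y ≠ xi},
        A xi xj * gamK d s D₀ δ (dist xi xj) * (v xj - v xi) * ω xj xi

/-- The continuum nonlocal diffusion operator ℒ^δ. -/
def Lc (d : ℕ) (δ s D₀ : ℝ) (A : Eu d → Eu d → ℝ) (u : Eu d → ℝ) (x : Eu d) : ℝ :=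
  2 * ∫ y in ball x δ, A x y * gamK d s D₀ δ (dist x y) * (u y - u x)

/-- The third-order polynomial reproducing property of the quadrature weights ω. -/
def Reproduces3 (d : ℕ) (Ω : Set (Eu d)) (δ h s D₀ : ℝ) (ω : Eu d → Eu d → ℝ) : Prop :=
  ∀ p : MvPolynomial (Fin d) ℝ, p.totalDegree ≤ 3 → ∀ xi ∈ chi d Ω δ h ∩ Ω,
    (∑ᶠ xj ∈ {y | y ∈ chi d Ω δ h ∧ y ∈ ball xi δ ∧ y ≠ xi},
        MvPolynomial.eval (fun i => xj i - xi i) p * gamK d s D₀ δ (dist xj xi) * ω xj xi)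
      = ∫ y in ball xi δ, MvPolynomial.eval (fun i => y i - xi i) p * gamK d s D₀ δ (dist y xi)

lemma gamK_pos {d : ℕ} {s D₀ δ r : ℝ} (hδ : 0 < δ) (hD₀ : 0 < D₀)
    (hr : 0 < r) (hrδ : r ≤ δ) : 0 < gamK d s D₀ δ r := by
  rw [gamK, if_pos ⟨hr, hrδ⟩]; positivity

lemma Lh_eq_sum {d : ℕ} {Ω : Set (Eu d)} {δ h s D₀ : ℝ} {A ω : Eu d → Eu d → ℝ}
    {xi : Eu d} (t : Finset (Eu d))
    (ht : (↑t : Set (Eu d)) = {y | y ∈ chi d Ω δ h ∧ y ∈ ball xi δ ∧ y ≠ xi})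
    (u : Eu d → ℝ) :
    Lh d Ω δ h s D₀ A ω u xi
      = 2 * ∑ xj ∈ t, A xi xj * gamK d s D₀ δ (dist xi xj) * (u xj - u xi) * ω xj xi := by
  rw [Lh, ← ht, finsum_mem_coe_finset]

lemma Lh_lin {d : ℕ} {Ω : Set (Eu d)} {δ h s D₀ : ℝ} {A ω : Eu d → Eu d → ℝ}
    (hfin : (chi d Ω δ h).Finite) (a b : ℝ) (u v : Eu d → ℝ) (xi : Eu d) :
    Lh d Ω δ h s D₀ A ω (fun x => a * u x + b * v x) xi
      = a * Lh d Ω δ h s D₀ A ω u xi + b * Lh d Ω δ h s D₀ A ω v xi := by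
  have hN : ({y | y ∈ chi d Ω δ h ∧ y ∈ ball xi δ ∧ y ≠ xi} : Set (Eu d)).Finite :=
    hfin.subset fun y hy => hy.1
  rw [Lh_eq_sum hN.toFinset hN.coe_toFinset u, Lh_eq_sum hN.toFinset hN.coe_toFinset v,
    Lh_eq_sum hN.toFinset hN.coe_toFinset _]
  rw [show ∑ xj ∈ hN.toFinset, A xi xj * gamK d s D₀ δ (dist xi xj)
        * ((a * u xj + b * v xj) - (a * u xi + b * v xi)) * ω xj xi
      = ∑ xj ∈ hN.toFinset, (a * (A xi xj * gamK d s D₀ δ (dist xi xj) * (u xj - u xi) * ω xj xi)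
        + b * (A xi xj * gamK d s D₀ δ (dist xi xj) * (v xj - v xi) * ω xj xi))
    from Finset.sum_congr rfl fun _ _ => by ring]
  rw [Finset.sum_add_distrib, ← Finset.mul_sum, ← Finset.mul_sum]
  ring

lemma frontier_cross {E : Type*} [NormedAddCommGroup E] [NormedSpace ℝ E] {Ω : Set E}
    (hΩ : IsOpen Ω) {a b : E} (ha : a ∈ Ω) (hb : b ∉ Ω) :
    ∃ z ∈ frontier Ω, dist b z ≤ dist a b := by
  set g : ℝ → E := fun t => a + t • (b - a) with hg
  have hgc : Continuous g := by fun_prop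
  set T : Set ℝ := {t | t ∈ Icc (0:ℝ) 1 ∧ g t ∈ Ω} with hT
  have h0T : (0:ℝ) ∈ T := by simp [hT, hg, ha]
  have hbdd : BddAbove T := ⟨1, fun t ht => ht.1.2⟩
  set c := sSup T with hc
  have hc0 : 0 ≤ c := le_csSup hbdd h0T
  have hc1 : c ≤ 1 := csSup_le ⟨0, h0T⟩ fun t ht => ht.1.2
  have hclos : g c ∈ closure Ω := by
    have h1 : c ∈ closure T := csSup_mem_closure ⟨0, h0T⟩ hbdd
    have h2 : closure T ⊆ g ⁻¹' closure Ω := by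
      apply closure_minimal _ (IsClosed.preimage hgc isClosed_closure)
      exact fun t ht => subset_closure ht.2
    exact h2 h1
  have hnot : g c ∉ Ω := by
    intro hmem
    have hcne : c ≠ 1 := by
      intro hce
      rw [hce] at hmem
      apply hb
      simpa [hg] using hmem
    have hclt : c < 1 := lt_of_le_of_ne hc1 hcne
    have hopen : IsOpen (g ⁻¹' Ω) := hΩ.preimage hgc
    obtain ⟨ε, hε, hball⟩ := Metric.isOpen_iff.mp hopen c hmem
    set t' := min (c + ε / 2) ((c + 1) / 2) with ht'
    have htc : c < t' := by
      apply lt_min <;> nlinarith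
    have ht1 : t' ≤ 1 := by
      apply min_le_of_right_le; nlinarith
    have htball : t' ∈ Metric.ball c ε := by
      rw [Metric.mem_ball, Real.dist_eq, abs_of_pos (by linarith)]
      calc t' - c ≤ (c + ε/2) - c := by apply sub_le_sub_right; exact min_le_left _ _
        _ < ε := by linarith
    have : t' ∈ T := ⟨⟨by linarith, ht1⟩, hball htball⟩
    exact absurd (le_csSup hbdd this) (not_le.mpr htc)
  refine ⟨g c, ⟨hclos, by rwa [hΩ.interior_eq]⟩, ?_⟩
  have : b - g c = (1 - c) • (b - a) := by
    rw [hg]; module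
  rw [dist_eq_norm, this, norm_smul, dist_eq_norm']
  rw [Real.norm_eq_abs, abs_of_nonneg (by linarith)]
  nlinarith [norm_nonneg (b - a)]

/-- discrete maximum propagation: at an interior maximizer, all neighbors attain the max. -/
lemma max_step {d : ℕ} {Ω : Set (Eu d)} {δ h s D₀ : ℝ} {A ω : Eu d → Eu d → ℝ}
    (hδ : 0 < δ) (hD₀ : 0 < D₀)
    (hfin : (chi d Ω δ h).Finite)
    (hApos : ∀ x ∈ NLdom d Ω δ, ∀ y ∈ NLdom d Ω δ, 0 < A x y)
    (hωpos : ∀ x ∈ chi d Ω δ h, ∀ y ∈ chi d Ω δ h, 0 < ω x y)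
    (w : Eu d → ℝ) (M : ℝ) (hM : ∀ y ∈ chi d Ω δ h, w y ≤ M)
    {xi : Eu d} (hxi : xi ∈ chi d Ω δ h) (hwxi : w xi = M)
    (hLh : Lh d Ω δ h s D₀ A ω w xi = 0)
    {xj : Eu d} (hxj : xj ∈ chi d Ω δ h) (hballj : xj ∈ ball xi δ) (hne : xj ≠ xi) :
    w xj = M := by
  have hN : ({y | y ∈ chi d Ω δ h ∧ y ∈ ball xi δ ∧ y ≠ xi} : Set (Eu d)).Finite :=
    hfin.subset fun y hy => hy.1
  rw [Lh_eq_sum hN.toFinset hN.coe_toFinset w] at hLh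
  have hsum : ∑ y ∈ hN.toFinset, A xi y * gamK d s D₀ δ (dist xi y) * (w y - w xi) * ω y xi = 0 := by
    linarith
  have hcpos : ∀ y ∈ hN.toFinset, 0 < A xi y * gamK d s D₀ δ (dist xi y) * ω y xi := by
    intro y hy
    rw [Set.Finite.mem_toFinset] at hy
    obtain ⟨hychi, hyball, hyne⟩ := hy
    have h1 : 0 < A xi y := hApos xi hxi.2 y hychi.2
    have h2 : 0 < gamK d s D₀ δ (dist xi y) := by
      refine gamK_pos hδ hD₀ ?_ ?_
      · rw [dist_pos]; exact fun e => hyne e.symm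
      · exact le_of_lt (by rwa [mem_ball, dist_comm] at hyball)
    have h3 : 0 < ω y xi := hωpos y hychi xi hxi
    positivity
  have hterm : ∀ y ∈ hN.toFinset,
      A xi y * gamK d s D₀ δ (dist xi y) * (w y - w xi) * ω y xi ≤ 0 := by
    intro y hy
    have hc := hcpos y hy
    have hyM : w y ≤ M := hM y (by rw [Set.Finite.mem_toFinset] at hy; exact hy.1)
    have : w y - w xi ≤ 0 := by rw [hwxi]; linarith
    nlinarith
  have hall := (Finset.sum_eq_zero_iff_of_nonpos hterm).mp hsum
  have hmemj : xj ∈ hN.toFinset := by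
    rw [Set.Finite.mem_toFinset]; exact ⟨hxj, hballj, hne⟩
  have hj := hall xj hmemj
  have hc := hcpos xj hmemj
  have heq : A xi xj * gamK d s D₀ δ (dist xi xj) * (w xj - w xi) * ω xj xi
      = (A xi xj * gamK d s D₀ δ (dist xi xj) * ω xj xi) * (w xj - w xi) := by ring
  rw [heq, mul_eq_zero] at hj
  rcases hj with hj | hj
  · exact absurd hj (ne_of_gt hc)
  · rw [← hwxi]; linarith

/-- From a maximizer in chi, reach a collar point attaining the max. -/
lemma max_reach {d : ℕ} {Ω : Set (Eu d)} {δ h s D₀ : ℝ} {A ω : Eu d → Eu d → ℝ}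
    (hd : 1 ≤ d) (hΩopen : IsOpen Ω) (hΩbdd : Bornology.IsBounded Ω)
    (hδ : 0 < δ) (hh : 0 < h) (hhδ : h < δ) (hD₀ : 0 < D₀)
    (hfin : (chi d Ω δ h).Finite)
    (hApos : ∀ x ∈ NLdom d Ω δ, ∀ y ∈ NLdom d Ω δ, 0 < A x y)
    (hωpos : ∀ x ∈ chi d Ω δ h, ∀ y ∈ chi d Ω δ h, 0 < ω x y)
    (w : Eu d → ℝ) (M : ℝ) (hM : ∀ y ∈ chi d Ω δ h, w y ≤ M)
    (hw0 : ∀ xi ∈ chi d Ω δ h ∩ Ω, Lh d Ω δ h s D₀ A ω w xi = 0)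
    {x : Eu d} (hx : x ∈ chi d Ω δ h) (hwx : w x = M) :
    ∃ b ∈ chi d Ω δ h ∩ NLcollar d Ω δ, w b = M := by
  classical
  set i0 : Fin d := ⟨0, hd⟩ with hi0
  set v : Eu d := h • EuclideanSpace.single i0 (1:ℝ) with hv
  have hnv : ‖v‖ = h := by
    rw [hv, norm_smul, EuclideanSpace.norm_single]
    simp [abs_of_pos hh]
  set seq : ℕ → Eu d := fun n => x + (n : ℝ) • v with hseq
  have hseq0 : seq 0 = x := by simp [hseq]
  have hseqS : ∀ n, seq (n + 1) = seq n + v := by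
    intro n
    simp only [hseq]
    push_cast
    rw [add_smul, one_smul, add_assoc]
  -- escape from Ω
  obtain ⟨R, hR⟩ := hΩbdd.subset_closedBall 0
  obtain ⟨n₀, hn₀⟩ := exists_nat_gt ((R + ‖x‖) / h)
  have hescape : seq n₀ ∉ Ω := by
    intro hmem
    have h1 : ‖seq n₀‖ ≤ R := by simpa using hR hmem
    have h2 : ‖(n₀ : ℝ) • v‖ ≤ ‖seq n₀‖ + ‖x‖ := by
      calc ‖(n₀ : ℝ) • v‖ = ‖seq n₀ - x‖ := by rw [hseq]; congr 1; module
        _ ≤ ‖seq n₀‖ + ‖x‖ := norm_sub_le _ _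
    rw [norm_smul, hnv, Real.norm_natCast] at h2
    have h3 : (n₀ : ℝ) * h > R + ‖x‖ := by
      rw [div_lt_iff₀ hh] at hn₀; linarith
    linarith
  -- first exit index
  have hQ : ∃ n, seq n ∉ Ω := ⟨n₀, hescape⟩
  set k := Nat.find hQ with hk
  have hkout : seq k ∉ Ω := Nat.find_spec hQ
  have hkin : ∀ m, m < k → seq m ∈ Ω := by
    intro m hm
    by_contra hc
    exact absurd (Nat.find_le hc) (not_le.mpr hm)
  -- all chain points up to k are in chi and attain M
  have claim : ∀ j, j ≤ k → seq j ∈ chi d Ω δ h ∧ w (seq j) = M := by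
    intro j
    induction j with
    | zero => intro _; rw [hseq0]; exact ⟨hx, hwx⟩
    | succ j ih =>
      intro hj
      have hjk : j < k := Nat.lt_of_lt_of_le (Nat.lt_succ_self j) hj
      obtain ⟨hjchi, hjw⟩ := ih hjk.le
      have hjΩ : seq j ∈ Ω := hkin j hjk
      have hdistj : dist (seq (j+1)) (seq j) = h := by
        rw [hseqS, dist_eq_norm, add_sub_cancel_left, hnv]
      have hnej : seq (j+1) ≠ seq j := by
        intro he
        rw [he, dist_self] at hdistj
        linarith
      -- grid membership
      have hgrid : seq (j+1) ∈ gridSet d h := by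
        intro i
        obtain ⟨ki, hki⟩ := hjchi.1 i
        by_cases hii : i = i0
        · refine ⟨ki + 1, ?_⟩
          rw [hseqS]
          have : (seq j + v) i = seq j i + v i := rfl
          rw [this, hki, hv]
          have : (h • EuclideanSpace.single i0 (1:ℝ)) i
              = h * (EuclideanSpace.single i0 (1:ℝ)) i := rfl
          rw [this, EuclideanSpace.single_apply, if_pos hii]
          push_cast; ring
        · refine ⟨ki, ?_⟩
          rw [hseqS]
          have h1 : (seq j + v) i = seq j i + v i := rfl
          have h2 : (h • EuclideanSpace.single i0 (1:ℝ)) i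
              = h * (EuclideanSpace.single i0 (1:ℝ)) i := rfl
          rw [h1, hki, hv, h2, EuclideanSpace.single_apply, if_neg hii]
          ring
      -- NLdom membership
      have hdom : seq (j+1) ∈ NLdom d Ω δ := by
        by_cases hin : seq (j+1) ∈ Ω
        · exact Or.inl hin
        · refine Or.inr ⟨hin, ?_⟩
          obtain ⟨z, hz, hzd⟩ := frontier_cross hΩopen hjΩ hin
          calc Metric.infDist (seq (j+1)) (frontier Ω) ≤ dist (seq (j+1)) z :=
                Metric.infDist_le_dist_of_mem hz
            _ ≤ dist (seq j) (seq (j+1)) := hzd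
            _ = h := by rw [dist_comm]; exact hdistj
            _ < δ := hhδ
      have hchiS : seq (j+1) ∈ chi d Ω δ h := ⟨hgrid, hdom⟩
      have hball : seq (j+1) ∈ ball (seq j) δ := by
        rw [mem_ball, hdistj]; exact hhδ
      refine ⟨hchiS, ?_⟩
      exact max_step hδ hD₀ hfin hApos hωpos w M hM hjchi hjw
        (hw0 (seq j) ⟨hjchi, hjΩ⟩) hchiS hball hnej
  obtain ⟨hkchi, hkw⟩ := claim k le_rfl
  have hkcol : seq k ∈ NLcollar d Ω δ := by
    rcases hkchi.2 with hin | hcol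
    · exact absurd hin hkout
    · exact hcol
  exact ⟨seq k, ⟨hkchi, hkcol⟩, hkw⟩

/-- Uniqueness core: homogeneous solutions vanish on chi. -/
lemma homog_zero {d : ℕ} {Ω : Set (Eu d)} {δ h s D₀ : ℝ} {A ω : Eu d → Eu d → ℝ}
    (hd : 1 ≤ d) (hΩopen : IsOpen Ω) (hΩbdd : Bornology.IsBounded Ω)
    (hδ : 0 < δ) (hh : 0 < h) (hhδ : h < δ) (hD₀ : 0 < D₀)
    (hfin : (chi d Ω δ h).Finite)
    (hApos : ∀ x ∈ NLdom d Ω δ, ∀ y ∈ NLdom d Ω δ, 0 < A x y)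
    (hωpos : ∀ x ∈ chi d Ω δ h, ∀ y ∈ chi d Ω δ h, 0 < ω x y)
    (hne : (chi d Ω δ h ∩ Ω).Nonempty)
    (w : Eu d → ℝ)
    (hw0 : ∀ xi ∈ chi d Ω δ h ∩ Ω, Lh d Ω δ h s D₀ A ω w xi = 0)
    (hwB : ∀ xi ∈ chi d Ω δ h ∩ NLcollar d Ω δ, w xi = 0) :
    ∀ x ∈ chi d Ω δ h, w x = 0 := by
  -- the one-sided bound, proved for arbitrary w with the hypotheses
  have upper : ∀ w' : Eu d → ℝ,
      (∀ xi ∈ chi d Ω δ h ∩ Ω, Lh d Ω δ h s D₀ A ω w' xi = 0) →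
      (∀ xi ∈ chi d Ω δ h ∩ NLcollar d Ω δ, w' xi = 0) →
      ∀ x ∈ chi d Ω δ h, w' x ≤ 0 := by
    intro w' hw0' hwB' x hx
    have hchine : (chi d Ω δ h).Nonempty := ⟨x, hx⟩
    obtain ⟨x0, hx0, hmax⟩ := Set.exists_max_image (chi d Ω δ h) w' hfin hchine
    set M := w' x0 with hM
    have hMx : ∀ y ∈ chi d Ω δ h, w' y ≤ M := hmax
    obtain ⟨b, hb, hbw⟩ := max_reach hd hΩopen hΩbdd hδ hh hhδ hD₀ hfin hApos hωpos
      w' M hMx hw0' hx0 rfl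
    have hM0 : M = 0 := by rw [← hbw]; exact hwB' b hb
    calc w' x ≤ M := hMx x hx
      _ = 0 := hM0
  intro x hx
  have h1 : w x ≤ 0 := upper w hw0 hwB x hx
  have h2 : (fun y => -w y) x ≤ 0 := by
    refine upper (fun y => -w y) ?_ ?_ x hx
    · intro xi hxi
      have hfun : (fun y => -w y) = fun y => (-1 : ℝ) * w y + 0 * w y := by
        funext y; ring
      rw [hfun, Lh_lin hfin, hw0 xi hxi]; ring
    · intro xi hxi
      simp [hwB xi hxi]
  simp only at h2
  linarith


/-- Well-posedness of the discretized nonlocal diffusion problem: for every right-hand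
side f and boundary datum u^D there is a unique grid function u_h with
−ℒ_h^δ u_h = f on χ_h ∩ Ω and u_h = u^D on χ_h ∩ Ω_δ. -/
theorem discrete_wellposed
    (d : ℕ) (hd : 1 ≤ d) (Ω : Set (Eu d))
    (hΩopen : IsOpen Ω) (hΩbdd : Bornology.IsBounded Ω) (hΩconn : IsConnected Ω)
    (δ : ℝ) (hδ : 0 < δ) (h : ℝ) (hh : 0 < h) (hhδ : h < δ)
    (s : ℝ) (hs0 : 0 ≤ s) (hsd : s < (d : ℝ))
    (D₀ : ℝ) (hD₀ : 0 < D₀)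
    (hnorm : (∫ z in ball (0 : Eu d) δ, gamK d s D₀ δ ‖z‖ * ‖z‖ ^ 2) = (d : ℝ))
    (hfin : (chi d Ω δ h).Finite)
    (A ω : Eu d → Eu d → ℝ)
    (hApos : ∀ x ∈ NLdom d Ω δ, ∀ y ∈ NLdom d Ω δ, 0 < A x y)
    (hωpos : ∀ x ∈ chi d Ω δ h, ∀ y ∈ chi d Ω δ h, 0 < ω x y)
    (hne : (chi d Ω δ h ∩ Ω).Nonempty) :
    ∀ f uD : Eu d → ℝ, ∃ u : Eu d → ℝ,
      ((∀ xi ∈ chi d Ω δ h ∩ Ω, -(Lh d Ω δ h s D₀ A ω u xi) = f xi) ∧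
        (∀ xi ∈ chi d Ω δ h ∩ NLcollar d Ω δ, u xi = uD xi)) ∧
      ∀ u' : Eu d → ℝ,
        (∀ xi ∈ chi d Ω δ h ∩ Ω, -(Lh d Ω δ h s D₀ A ω u' xi) = f xi) →
        (∀ xi ∈ chi d Ω δ h ∩ NLcollar d Ω δ, u' xi = uD xi) →
        ∀ x ∈ chi d Ω δ h, u' x = u x := by
  classical
  intro f uD
  haveI : Fintype ↥(chi d Ω δ h ∩ Ω) := (hfin.subset inter_subset_left).fintype
  -- linear extension-by-zero
  set E : (↥(chi d Ω δ h ∩ Ω) → ℝ) → (Eu d → ℝ) :=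
    fun v x => if hx : x ∈ chi d Ω δ h ∩ Ω then v ⟨x, hx⟩ else 0 with hE
  have hEadd : ∀ (v₁ v₂ : ↥(chi d Ω δ h ∩ Ω) → ℝ),
      E (v₁ + v₂) = fun x => 1 * E v₁ x + 1 * E v₂ x := by
    intro v₁ v₂
    funext x
    simp only [hE]
    split_ifs with hc
    · simp
    · simp
  have hEsmul : ∀ (c : ℝ) (v : ↥(chi d Ω δ h ∩ Ω) → ℝ),
      E (c • v) = fun x => c * E v x + 0 * E v x := by
    intro c v
    funext x
    simp only [hE]
    split_ifs with hc
    · simp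
    · simp
  -- the linear map of the homogeneous problem
  set T : (↥(chi d Ω δ h ∩ Ω) → ℝ) →ₗ[ℝ] (↥(chi d Ω δ h ∩ Ω) → ℝ) :=
    { toFun := fun v xi => -(Lh d Ω δ h s D₀ A ω (E v) xi),
      map_add' := by
        intro v₁ v₂
        funext xi
        show -(Lh d Ω δ h s D₀ A ω (E (v₁ + v₂)) ↑xi)
          = -(Lh d Ω δ h s D₀ A ω (E v₁) ↑xi) + -(Lh d Ω δ h s D₀ A ω (E v₂) ↑xi)
        rw [hEadd v₁ v₂, Lh_lin hfin]
        ring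
      map_smul' := by
        intro c v
        funext xi
        show -(Lh d Ω δ h s D₀ A ω (E (c • v)) ↑xi)
          = c * (-(Lh d Ω δ h s D₀ A ω (E v) ↑xi))
        rw [hEsmul c v, Lh_lin hfin]
        ring } with hT
  -- injectivity via max principle
  have hinj : Function.Injective T := by
    rw [← LinearMap.ker_eq_bot, LinearMap.ker_eq_bot']
    intro v hv
    have hLv : ∀ xi ∈ chi d Ω δ h ∩ Ω, Lh d Ω δ h s D₀ A ω (E v) xi = 0 := by
      intro xi hxi
      have := congrFun hv ⟨xi, hxi⟩
      simp only [hT, LinearMap.coe_mk, AddHom.coe_mk, Pi.zero_apply] at this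
      linarith
    have hBv : ∀ xi ∈ chi d Ω δ h ∩ NLcollar d Ω δ, E v xi = 0 := by
      intro xi hxi
      have hnot : xi ∉ chi d Ω δ h ∩ Ω := fun hc => hxi.2.1 hc.2
      simp only [hE]
      rw [dif_neg hnot]
    have hz := homog_zero hd hΩopen hΩbdd hδ hh hhδ hD₀ hfin hApos hωpos hne
      (E v) hLv hBv
    funext xi
    have hx := hz xi.1 xi.2.1
    simp only [hE] at hx
    rw [dif_pos xi.2] at hx
    simpa using hx
  have hsurj : Function.Surjective T := (LinearMap.injective_iff_surjective).mp hinj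
  -- boundary extension
  set g : Eu d → ℝ := fun x => if x ∈ NLcollar d Ω δ then uD x else 0 with hg
  obtain ⟨v, hv⟩ := hsurj (fun xi => f xi.1 + Lh d Ω δ h s D₀ A ω g xi.1)
  set u : Eu d → ℝ := fun x => E v x + g x with hu
  have hLu : ∀ xi : Eu d, Lh d Ω δ h s D₀ A ω u xi
      = Lh d Ω δ h s D₀ A ω (E v) xi + Lh d Ω δ h s D₀ A ω g xi := by
    intro xi
    have he : u = fun x => 1 * E v x + 1 * g x := by funext x; simp [hu]
    rw [he, Lh_lin hfin]; ring
  have hmain : ∀ xi ∈ chi d Ω δ h ∩ Ω, -(Lh d Ω δ h s D₀ A ω u xi) = f xi := by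
    intro xi hxi
    have h1 := congrFun hv ⟨xi, hxi⟩
    simp only [hT, LinearMap.coe_mk, AddHom.coe_mk] at h1
    rw [hLu]
    linarith
  have hbdy : ∀ xi ∈ chi d Ω δ h ∩ NLcollar d Ω δ, u xi = uD xi := by
    intro xi hxi
    have h1 : xi ∉ chi d Ω δ h ∩ Ω := fun hc => hxi.2.1 hc.2
    show E v xi + g xi = uD xi
    simp only [hE, hg]
    rw [dif_neg h1, if_pos hxi.2]
    ring
  refine ⟨u, ⟨hmain, hbdy⟩, ?_⟩
  intro u' hu'1 hu'2 x hx
  set w : Eu d → ℝ := fun y => u' y - u y with hw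
  have hLw : ∀ xi ∈ chi d Ω δ h ∩ Ω, Lh d Ω δ h s D₀ A ω w xi = 0 := by
    intro xi hxi
    have he : w = fun y => 1 * u' y + (-1) * u y := by funext y; simp [hw]; ring
    rw [he, Lh_lin hfin]
    have h1 := hu'1 xi hxi
    have h2 := hmain xi hxi
    linarith
  have hBw : ∀ xi ∈ chi d Ω δ h ∩ NLcollar d Ω δ, w xi = 0 := by
    intro xi hxi
    simp only [hw]
    rw [hu'2 xi hxi, hbdy xi hxi]
    ring
  have hz := homog_zero hd hΩopen hΩbdd hδ hh hhδ hD₀ hfin hApos hωpos hne w hLw hBw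
  have := hz x hx
  simp only [hw] at this
  linarith
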